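/- Let 0 < μ < L and suppose x₀, x₁, x*, g₀, g₁ ∈ ℝ^n and f₀, f₁, f* ∈ ℝ satisfy the three F_{μ,L}-interpolation inequalities between (x₀,f₀,g₀), (x₁,f₁,g₁), (x*,f*,0), together with the combined inequality g₁ᵀ(x₀ - (2/(L+μ))g₀ - x₁) ≥ 0. Then f₁ - f* ≤ ((L-μ)/(L+μ))²(f₀ - f*). -/

import Mathlib

open RealInnerProductSpace

/-- The `F_{μ,L}` interpolation inequality between the triples `(xi, fi, gi)` and
`(xj, fj, gj)`. -/
def InterpIneq {n : ℕ} (μ L : ℝ) (xi xj : EuclideanSpace ℝ (Fin n)) (fi fj : ℝ)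
    (gi gj : EuclideanSpace ℝ (Fin n)) : Prop :=
  fi ≥ fj + ⟪gj, xi - xj⟫ + 1 / (2 * (1 - μ / L)) *
    ((1 / L) * ‖gi - gj‖ ^ 2 + μ * ‖xi - xj‖ ^ 2 - (2 * μ / L) * ⟪gj - gi, xj - xi⟫)

/-- Cleared-denominator scalar form of the interpolation inequality. -/
lemma interp_scalar {n : ℕ} (μ L : ℝ) (hμ : 0 < μ) (hμL : μ < L)
    (xi xj : EuclideanSpace ℝ (Fin n)) (fi fj : ℝ) (gi gj : EuclideanSpace ℝ (Fin n))
    (h : InterpIneq μ L xi xj fi fj gi gj) :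
    0 ≤ 2 * (L - μ) * (fi - fj - ⟪gj, xi - xj⟫) - ‖gi - gj‖ ^ 2
      - μ * L * ‖xi - xj‖ ^ 2 + 2 * μ * ⟪gj - gi, xj - xi⟫ := by
  have hL : (0 : ℝ) < L := hμ.trans hμL
  have hL0 : (L : ℝ) ≠ 0 := ne_of_gt hL
  have hLμ : (0 : ℝ) < L - μ := by linarith
  have hLμ0 : (L : ℝ) - μ ≠ 0 := ne_of_gt hLμ
  unfold InterpIneq at h
  set P : ℝ := ⟪gj, xi - xj⟫ with hP
  set N1 : ℝ := ‖gi - gj‖ ^ 2 with hN1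
  set N2 : ℝ := ‖xi - xj‖ ^ 2 with hN2
  set C : ℝ := ⟪gj - gi, xj - xi⟫ with hC
  have hk : 1 / (2 * (1 - μ / L)) = L / (2 * (L - μ)) := by
    field_simp
  rw [hk] at h
  have hs : 0 ≤ fi - fj - P - L / (2 * (L - μ)) *
      ((1 / L) * N1 + μ * N2 - (2 * μ / L) * C) := by linarith [h]
  have key : 2 * (L - μ) * (fi - fj - P) - N1 - μ * L * N2 + 2 * μ * C
      = (2 * (L - μ)) * (fi - fj - P - L / (2 * (L - μ)) *
        ((1 / L) * N1 + μ * N2 - (2 * μ / L) * C)) := by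
    field_simp
    ring
  rw [key]
  exact mul_nonneg (by linarith) hs

set_option maxHeartbeats 2000000 in
/-- Purely real key lemma: the SOS certificate. -/
lemma key_real (μ L a b c d e f g h i j f₀ f₁ fs : ℝ) (hμ : 0 < μ) (hμL : μ < L)
    (t1 : 0 ≤ 2 * (L - μ) * (f₀ - f₁ - (d - g)) - (h - 2 * i + j)
      - μ * L * (a - 2 * b + e) + 2 * μ * (g - d - f + c))
    (t2 : 0 ≤ 2 * (L - μ) * (fs - f₀ + c) - h - μ * L * a + 2 * μ * c)
    (t3 : 0 ≤ 2 * (L - μ) * (fs - f₁ + g) - j - μ * L * e + 2 * μ * g)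
    (t4 : 0 ≤ (L + μ) * (d - g) - 2 * i)
    (n1 : 0 ≤ (L * (L + 3 * μ)) ^ 2 * a + (L * (L + μ)) ^ 2 * e + (3 * L + μ) ^ 2 * h
      + (L + μ) ^ 2 * j - 2 * L ^ 2 * (L + 3 * μ) * (L + μ) * b
      - 2 * L * (L + 3 * μ) * (3 * L + μ) * c - 2 * L * (L + 3 * μ) * (L + μ) * d
      + 2 * L * (L + μ) * (3 * L + μ) * f + 2 * L * (L + μ) ^ 2 * g
      + 2 * (3 * L + μ) * (L + μ) * i)
    (n2 : 0 ≤ 4 * μ ^ 2 * L ^ 2 * (L + μ) ^ 2 * e + (L - μ) ^ 4 * h + (L + μ) ^ 4 * j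
      - 4 * μ * L * (L + μ) * (L - μ) ^ 2 * f - 4 * μ * L * (L + μ) ^ 3 * g
      + 2 * (L - μ) ^ 2 * (L + μ) ^ 2 * i) :
    f₁ - fs ≤ ((L - μ) / (L + μ)) ^ 2 * (f₀ - fs) := by
  have hL : (0 : ℝ) < L := hμ.trans hμL
  have hd1 : (0 : ℝ) < L - μ := by linarith
  have hd2 : (0 : ℝ) < L + μ := by linarith
  have hd3 : (0 : ℝ) < L + 3 * μ := by linarith
  have hc1 : (0 : ℝ) ≤ L * (L + 3 * μ) * (L - μ) * (L + μ) := by positivity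
  have hc2 : (0 : ℝ) ≤ 2 * μ * L * (L + 3 * μ) * (L - μ) := by positivity
  have hc3 : (0 : ℝ) ≤ 2 * μ * L * (L + 3 * μ) * (L + μ) := by positivity
  have hc4 : (0 : ℝ) ≤ 2 * L * (L + 3 * μ) * (L - μ) * (L + μ) := by positivity
  have hc5 : (0 : ℝ) ≤ μ * (L - μ) := by positivity
  have m1 := mul_nonneg hc1 t1
  have m2 := mul_nonneg hc2 t2
  have m3 := mul_nonneg hc3 t3
  have m4 := mul_nonneg hc4 t4
  have m5 := mul_nonneg hc5 n1
  have iden : 2 * L * (L + 3 * μ) * (L - μ) *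
      ((L - μ) ^ 2 * (f₀ - fs) - (L + μ) ^ 2 * (f₁ - fs))
      = L * (L + 3 * μ) * (L - μ) * (L + μ) *
          (2 * (L - μ) * (f₀ - f₁ - (d - g)) - (h - 2 * i + j)
            - μ * L * (a - 2 * b + e) + 2 * μ * (g - d - f + c))
        + 2 * μ * L * (L + 3 * μ) * (L - μ) *
          (2 * (L - μ) * (fs - f₀ + c) - h - μ * L * a + 2 * μ * c)
        + 2 * μ * L * (L + 3 * μ) * (L + μ) *
          (2 * (L - μ) * (fs - f₁ + g) - j - μ * L * e + 2 * μ * g)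
        + 2 * L * (L + 3 * μ) * (L - μ) * (L + μ) * ((L + μ) * (d - g) - 2 * i)
        + μ * (L - μ) *
          ((L * (L + 3 * μ)) ^ 2 * a + (L * (L + μ)) ^ 2 * e + (3 * L + μ) ^ 2 * h
            + (L + μ) ^ 2 * j - 2 * L ^ 2 * (L + 3 * μ) * (L + μ) * b
            - 2 * L * (L + 3 * μ) * (3 * L + μ) * c - 2 * L * (L + 3 * μ) * (L + μ) * d
            + 2 * L * (L + μ) * (3 * L + μ) * f + 2 * L * (L + μ) ^ 2 * g
            + 2 * (3 * L + μ) * (L + μ) * i)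
        + (4 * μ ^ 2 * L ^ 2 * (L + μ) ^ 2 * e + (L - μ) ^ 4 * h + (L + μ) ^ 4 * j
            - 4 * μ * L * (L + μ) * (L - μ) ^ 2 * f - 4 * μ * L * (L + μ) ^ 3 * g
            + 2 * (L - μ) ^ 2 * (L + μ) ^ 2 * i) := by ring
  have hbig : 0 ≤ 2 * L * (L + 3 * μ) * (L - μ) *
      ((L - μ) ^ 2 * (f₀ - fs) - (L + μ) ^ 2 * (f₁ - fs)) := by
    rw [iden]; linarith [m1, m2, m3, m4, m5, n2]
  have hfac : (0 : ℝ) < 2 * L * (L + 3 * μ) * (L - μ) := by positivity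
  have hbr : 0 ≤ (L - μ) ^ 2 * (f₀ - fs) - (L + μ) ^ 2 * (f₁ - fs) := by
    nlinarith [hbig, hfac]
  have hLμ2 : (0 : ℝ) < (L + μ) ^ 2 := by positivity
  rw [div_pow, div_mul_eq_mul_div, le_div_iff₀ hLμ2]
  nlinarith [hbr]

theorem stmt9 {n : ℕ} (μ L : ℝ) (hμ : 0 < μ) (hμL : μ < L)
    (x₀ x₁ xstar g₀ g₁ : EuclideanSpace ℝ (Fin n)) (f₀ f₁ fstar : ℝ)
    (h1 : InterpIneq μ L x₀ x₁ f₀ f₁ g₀ g₁)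
    (h2 : InterpIneq μ L xstar x₀ fstar f₀ 0 g₀)
    (h3 : InterpIneq μ L xstar x₁ fstar f₁ 0 g₁)
    (h4 : ⟪g₁, x₀ - (2 / (L + μ)) • g₀ - x₁⟫ ≥ 0) :
    f₁ - fstar ≤ ((L - μ) / (L + μ)) ^ 2 * (f₀ - fstar) := by
  have hL : (0 : ℝ) < L := hμ.trans hμL
  set p : EuclideanSpace ℝ (Fin n) := x₀ - xstar with hp
  set q : EuclideanSpace ℝ (Fin n) := x₁ - xstar with hq
  have i1 := interp_scalar μ L hμ hμL x₀ x₁ f₀ f₁ g₀ g₁ h1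
  have i2 := interp_scalar μ L hμ hμL xstar x₀ fstar f₀ 0 g₀ h2
  have i3 := interp_scalar μ L hμ hμL xstar x₁ fstar f₁ 0 g₁ h3
  have e01 : x₀ - x₁ = p - q := by rw [hp, hq]; abel
  have e10 : x₁ - x₀ = q - p := by rw [hp, hq]; abel
  have es0 : xstar - x₀ = -p := by rw [hp]; abel
  have e0s : x₀ - xstar = p := rfl
  have es1 : xstar - x₁ = -q := by rw [hq]; abel
  have e1s : x₁ - xstar = q := rfl
  have exn : ∀ u v : EuclideanSpace ℝ (Fin n),
      ‖u - v‖ ^ 2 = ⟪u, u⟫ - 2 * ⟪u, v⟫ + ⟪v, v⟫ := by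
    intro u v
    rw [@norm_sub_sq_real, real_inner_self_eq_norm_sq, real_inner_self_eq_norm_sq]
  -- t1 from i1
  have t1 : 0 ≤ 2 * (L - μ) * (f₀ - f₁ - (⟪p, g₁⟫ - ⟪q, g₁⟫))
      - (⟪g₀, g₀⟫ - 2 * ⟪g₀, g₁⟫ + ⟪g₁, g₁⟫)
      - μ * L * (⟪p, p⟫ - 2 * ⟪p, q⟫ + ⟪q, q⟫)
      + 2 * μ * (⟪q, g₁⟫ - ⟪p, g₁⟫ - ⟪q, g₀⟫ + ⟪p, g₀⟫) := by
    rw [e01, e10] at i1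
    have hgd : ⟪g₁, p - q⟫ = ⟪p, g₁⟫ - ⟪q, g₁⟫ := by
      rw [inner_sub_right, real_inner_comm g₁ p, real_inner_comm g₁ q]
    have hcr : ⟪g₁ - g₀, q - p⟫ = ⟪q, g₁⟫ - ⟪p, g₁⟫ - ⟪q, g₀⟫ + ⟪p, g₀⟫ := by
      simp only [inner_sub_left, inner_sub_right]
      rw [real_inner_comm g₁ q, real_inner_comm g₁ p, real_inner_comm g₀ q,
        real_inner_comm g₀ p]
      ring
    rw [hgd, exn g₀ g₁, exn p q, hcr] at i1
    linarith [i1]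
  -- t2 from i2
  have t2 : 0 ≤ 2 * (L - μ) * (fstar - f₀ + ⟪p, g₀⟫) - ⟪g₀, g₀⟫
      - μ * L * ⟪p, p⟫ + 2 * μ * ⟪p, g₀⟫ := by
    rw [es0, e0s] at i2
    have hg0 : ⟪g₀, -p⟫ = -⟪p, g₀⟫ := by
      rw [inner_neg_right, real_inner_comm g₀ p]
    have hn0 : ‖(0 : EuclideanSpace ℝ (Fin n)) - g₀‖ ^ 2 = ⟪g₀, g₀⟫ := by
      rw [zero_sub, norm_neg, real_inner_self_eq_norm_sq]
    have hnp : ‖-p‖ ^ 2 = ⟪p, p⟫ := by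
      rw [norm_neg, real_inner_self_eq_norm_sq]
    have hc0 : ⟪g₀ - 0, p⟫ = ⟪p, g₀⟫ := by
      rw [sub_zero, real_inner_comm g₀ p]
    rw [hg0, hn0, hnp, hc0] at i2
    linarith [i2]
  -- t3 from i3
  have t3 : 0 ≤ 2 * (L - μ) * (fstar - f₁ + ⟪q, g₁⟫) - ⟪g₁, g₁⟫
      - μ * L * ⟪q, q⟫ + 2 * μ * ⟪q, g₁⟫ := by
    rw [es1, e1s] at i3
    have hg1 : ⟪g₁, -q⟫ = -⟪q, g₁⟫ := by
      rw [inner_neg_right, real_inner_comm g₁ q]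
    have hn1 : ‖(0 : EuclideanSpace ℝ (Fin n)) - g₁‖ ^ 2 = ⟪g₁, g₁⟫ := by
      rw [zero_sub, norm_neg, real_inner_self_eq_norm_sq]
    have hnq : ‖-q‖ ^ 2 = ⟪q, q⟫ := by
      rw [norm_neg, real_inner_self_eq_norm_sq]
    have hc1 : ⟪g₁ - 0, q⟫ = ⟪q, g₁⟫ := by
      rw [sub_zero, real_inner_comm g₁ q]
    rw [hg1, hn1, hnq, hc1] at i3
    linarith [i3]
  -- t4 from h4
  have hLμpos : (0 : ℝ) < L + μ := by linarith
  have t4 : 0 ≤ (L + μ) * (⟪p, g₁⟫ - ⟪q, g₁⟫) - 2 * ⟪g₀, g₁⟫ := by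
    have hrw : x₀ - (2 / (L + μ)) • g₀ - x₁ = (p - q) - (2 / (L + μ)) • g₀ := by
      rw [hp, hq]; abel
    rw [hrw] at h4
    have hexp : ⟪g₁, p - q - (2 / (L + μ)) • g₀⟫
        = ⟪p, g₁⟫ - ⟪q, g₁⟫ - (2 / (L + μ)) * ⟪g₀, g₁⟫ := by
      simp only [inner_sub_right, real_inner_smul_right]
      rw [real_inner_comm g₁ p, real_inner_comm g₁ q, real_inner_comm g₁ g₀]
    rw [hexp] at h4
    have hne : (L + μ) ≠ 0 := ne_of_gt hLμpos
    have hkey : (L + μ) * (⟪p, g₁⟫ - ⟪q, g₁⟫) - 2 * ⟪g₀, g₁⟫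
        = (L + μ) * (⟪p, g₁⟫ - ⟪q, g₁⟫ - 2 / (L + μ) * ⟪g₀, g₁⟫) := by
      field_simp
    rw [hkey]
    exact mul_nonneg hLμpos.le (by linarith [h4])
  -- n1, n2 from squared norms
  have exw : ∀ (c1 c2 c3 c4 : ℝ),
      0 ≤ c1 ^ 2 * ⟪p, p⟫ + c2 ^ 2 * ⟪q, q⟫ + c3 ^ 2 * ⟪g₀, g₀⟫ + c4 ^ 2 * ⟪g₁, g₁⟫
        - 2 * c1 * c2 * ⟪p, q⟫ - 2 * c1 * c3 * ⟪p, g₀⟫ - 2 * c1 * c4 * ⟪p, g₁⟫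
        + 2 * c2 * c3 * ⟪q, g₀⟫ + 2 * c2 * c4 * ⟪q, g₁⟫ + 2 * c3 * c4 * ⟪g₀, g₁⟫ := by
    intro c1 c2 c3 c4
    have hkey : c1 ^ 2 * ⟪p, p⟫ + c2 ^ 2 * ⟪q, q⟫ + c3 ^ 2 * ⟪g₀, g₀⟫ + c4 ^ 2 * ⟪g₁, g₁⟫
        - 2 * c1 * c2 * ⟪p, q⟫ - 2 * c1 * c3 * ⟪p, g₀⟫ - 2 * c1 * c4 * ⟪p, g₁⟫
        + 2 * c2 * c3 * ⟪q, g₀⟫ + 2 * c2 * c4 * ⟪q, g₁⟫ + 2 * c3 * c4 * ⟪g₀, g₁⟫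
        = ⟪c1 • p - c2 • q - c3 • g₀ - c4 • g₁, c1 • p - c2 • q - c3 • g₀ - c4 • g₁⟫ := by
      simp only [inner_sub_left, inner_sub_right, real_inner_smul_left, real_inner_smul_right]
      rw [real_inner_comm q p, real_inner_comm g₀ p, real_inner_comm g₁ p,
        real_inner_comm g₀ q, real_inner_comm g₁ q, real_inner_comm g₁ g₀]
      ring
    rw [hkey]
    exact real_inner_self_nonneg
  have n1 := exw (L * (L + 3 * μ)) (L * (L + μ)) (3 * L + μ) (L + μ)
  have n2 := exw 0 (-(2 * μ * L * (L + μ))) ((L - μ) ^ 2) ((L + μ) ^ 2)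
  have n1' : 0 ≤ (L * (L + 3 * μ)) ^ 2 * ⟪p, p⟫ + (L * (L + μ)) ^ 2 * ⟪q, q⟫
      + (3 * L + μ) ^ 2 * ⟪g₀, g₀⟫ + (L + μ) ^ 2 * ⟪g₁, g₁⟫
      - 2 * L ^ 2 * (L + 3 * μ) * (L + μ) * ⟪p, q⟫
      - 2 * L * (L + 3 * μ) * (3 * L + μ) * ⟪p, g₀⟫
      - 2 * L * (L + 3 * μ) * (L + μ) * ⟪p, g₁⟫
      + 2 * L * (L + μ) * (3 * L + μ) * ⟪q, g₀⟫ + 2 * L * (L + μ) ^ 2 * ⟪q, g₁⟫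
      + 2 * (3 * L + μ) * (L + μ) * ⟪g₀, g₁⟫ := by linarith [n1]
  have n2' : 0 ≤ 4 * μ ^ 2 * L ^ 2 * (L + μ) ^ 2 * ⟪q, q⟫ + (L - μ) ^ 4 * ⟪g₀, g₀⟫
      + (L + μ) ^ 4 * ⟪g₁, g₁⟫ - 4 * μ * L * (L + μ) * (L - μ) ^ 2 * ⟪q, g₀⟫
      - 4 * μ * L * (L + μ) ^ 3 * ⟪q, g₁⟫
      + 2 * (L - μ) ^ 2 * (L + μ) ^ 2 * ⟪g₀, g₁⟫ := by linarith [n2]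
  exact key_real μ L ⟪p, p⟫ ⟪p, q⟫ ⟪p, g₀⟫ ⟪p, g₁⟫ ⟪q, q⟫ ⟪q, g₀⟫ ⟪q, g₁⟫
    ⟪g₀, g₀⟫ ⟪g₀, g₁⟫ ⟪g₁, g₁⟫ f₀ f₁ fstar hμ hμL t1 t2 t3 t4 n1' n2'
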